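/- Under the hypotheses of the gradient lemma (x ∈ ℝ_{≥0}^n \ D with unique projection p = proj_D(x), and x_i ≠ α for all i where α is the shrinkage threshold), the Jacobian of proj_D at x equals VᵀGV, where V is the slicing matrix onto the support I of p, d = |I|, p̃ = Vp, ẽ the all-ones vector in ℝ^d, a = d‖Vx‖₂² − ‖Vx‖₁², b = dλ₂² − λ₁², and G = √(b/a)·E_d − (1/√(ab))·(λ₂²ẽẽᵀ + d·p̃p̃ᵀ − λ₁(ẽp̃ᵀ + p̃ẽᵀ)). -/

import Mathlib

noncomputable def l1 {n : ℕ} (x : Fin n → ℝ) : ℝ := ∑ i, |x i|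
noncomputable def l2 {n : ℕ} (x : Fin n → ℝ) : ℝ := Real.sqrt (∑ i, (x i) ^ 2)
noncomputable def Dset (n : ℕ) (lam1 lam2 : ℝ) : Set (Fin n → ℝ) :=
  {s | (∀ i, 0 ≤ s i) ∧ l1 s = lam1 ∧ l2 s = lam2}

noncomputable def Aq {n : ℕ} (I : Finset (Fin n)) (d : ℕ) (y : Fin n → ℝ) : ℝ :=
  d * (∑ j ∈ I, (y j)^2) - (∑ j ∈ I, y j)^2

noncomputable def Bt {n : ℕ} (I : Finset (Fin n)) (d : ℕ) (lam1 b : ℝ) (y : Fin n → ℝ) : ℝ :=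
  ((∑ j ∈ I, y j) - lam1 * Real.sqrt (Aq I d y) / Real.sqrt b) / d

noncomputable def Fm {n : ℕ} (I : Finset (Fin n)) (d : ℕ) (lam1 b : ℝ)
    (y : Fin n → ℝ) (i : Fin n) : ℝ :=
  if i ∈ I then
    Real.sqrt b * (Real.sqrt (Aq I d y))⁻¹ * (y i - (∑ j ∈ I, y j) / d) + lam1 / d
  else 0

lemma Fm_alt {n : ℕ} {I : Finset (Fin n)} {d : ℕ} {lam1 b : ℝ}
    (hb : 0 < b) (hd : (d:ℝ) ≠ 0) (y : Fin n → ℝ) (hA : 0 < Aq I d y)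
    {i : Fin n} (hi : i ∈ I) :
    Fm I d lam1 b y i
      = Real.sqrt b * (Real.sqrt (Aq I d y))⁻¹ * (y i - Bt I d lam1 b y) := by
  have hsA : (0:ℝ) < Real.sqrt (Aq I d y) := Real.sqrt_pos.2 hA
  have hsb : (0:ℝ) < Real.sqrt b := Real.sqrt_pos.2 hb
  rw [Fm, if_pos hi, Bt]
  field_simp
  ring

lemma sum_expand {n : ℕ} (u v : Fin n → ℝ) :
    ∑ i, (u i - v i)^2 = ∑ i, (u i)^2 - 2 * ∑ i, u i * v i + ∑ i, (v i)^2 := by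
  have h : ∀ i ∈ (Finset.univ : Finset (Fin n)),
      (u i - v i)^2 = (u i)^2 - 2 * (u i * v i) + (v i)^2 := fun i _ => by ring
  rw [Finset.sum_congr rfl h, Finset.sum_add_distrib, Finset.sum_sub_distrib,
    ← Finset.mul_sum]

lemma key {n : ℕ} {I : Finset (Fin n)} {d : ℕ} {lam1 lam2 b : ℝ}
    (hcard : I.card = d) (hd0 : 0 < d) (hl2 : 0 < lam2) (hl1 : 0 < lam1)
    (hbpos : 0 < b) (hb2 : b + lam1^2 = d * lam2^2)
    (y : Fin n → ℝ) (hA : 0 < Aq I d y)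
    (hlt : ∀ i ∈ I, Bt I d lam1 b y < y i)
    (hgt : ∀ i ∉ I, y i < Bt I d lam1 b y) :
    Fm I d lam1 b y ∈ Dset n lam1 lam2 ∧
      ∀ q ∈ Dset n lam1 lam2,
        l2 (fun i => q i - y i) ≤ l2 (fun i => Fm I d lam1 b y i - y i) →
          q = Fm I d lam1 b y := by
  have hdR : (0:ℝ) < d := by exact_mod_cast hd0
  set S1 : ℝ := ∑ j ∈ I, y j with hS1
  set A : ℝ := Aq I d y with hAdef
  set β : ℝ := Bt I d lam1 b y with hβ
  have hsA : (0:ℝ) < Real.sqrt A := Real.sqrt_pos.2 hA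
  have hsb : (0:ℝ) < Real.sqrt b := Real.sqrt_pos.2 hbpos
  set K : ℝ := Real.sqrt b * (Real.sqrt A)⁻¹ with hK
  have hKpos : 0 < K := mul_pos hsb (inv_pos.2 hsA)
  set w := Fm I d lam1 b y with hw
  have walt : ∀ i ∈ I, w i = K * (y i - β) := fun i hi =>
    Fm_alt hbpos hdR.ne' y hA hi
  have w0 : ∀ i ∉ I, w i = 0 := fun i hi => by simp [hw, Fm, hi]
  have wdef : ∀ i ∈ I, w i = K * (y i - S1 / d) + lam1 / d := fun i hi => by
    simp [hw, Fm, if_pos hi]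
    rfl
  have wpos : ∀ i ∈ I, 0 < w i := fun i hi => by
    rw [walt i hi]; exact mul_pos hKpos (sub_pos.2 (hlt i hi))
  have wnn : ∀ i, 0 ≤ w i := fun i => by
    by_cases hi : i ∈ I
    · exact (wpos i hi).le
    · rw [w0 i hi]
  -- centered sums
  have hsum_lin : ∑ i ∈ I, (y i - S1 / d) = 0 := by
    rw [Finset.sum_sub_distrib, Finset.sum_const, hcard, nsmul_eq_mul, ← hS1]
    field_simp
    ring
  have hsum_sq : ∑ i ∈ I, (y i - S1 / d)^2 = A / d := by
    have h : ∀ i ∈ I, (y i - S1/d)^2 = (y i)^2 - 2*(S1/d)*(y i) + (S1/d)^2 :=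
      fun i _ => by ring
    rw [Finset.sum_congr rfl h, Finset.sum_add_distrib, Finset.sum_sub_distrib,
      ← Finset.mul_sum, Finset.sum_const, hcard, nsmul_eq_mul, ← hS1, hAdef, Aq,
      ← hS1]
    field_simp
    ring
  have ht : S1 / d - β = lam1 * Real.sqrt A / (Real.sqrt b * d) := by
    rw [hβ, Bt, ← hAdef, ← hS1]
    field_simp
    ring
  have hsumw : ∑ i ∈ I, w i = lam1 := by
    rw [Finset.sum_congr rfl wdef, Finset.sum_add_distrib, ← Finset.mul_sum,
      hsum_lin, Finset.sum_const, hcard, nsmul_eq_mul]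
    field_simp
    ring
  have hK2 : K^2 = b / A := by
    rw [hK, mul_pow, inv_pow, Real.sq_sqrt hbpos.le, Real.sq_sqrt hA.le]
    rw [div_eq_mul_inv]
  have hsumw2 : ∑ i ∈ I, (w i)^2 = lam2^2 := by
    have h : ∀ i ∈ I, (w i)^2
        = K^2*(y i - S1/d)^2 + (2*K^2*(S1/d - β))*(y i - S1/d) + K^2*(S1/d - β)^2 :=
      fun i hi => by rw [walt i hi]; ring
    rw [Finset.sum_congr rfl h, Finset.sum_add_distrib, Finset.sum_add_distrib,
      ← Finset.mul_sum, ← Finset.mul_sum, hsum_lin, hsum_sq, Finset.sum_const,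
      hcard, nsmul_eq_mul, ht, hK2]
    rw [mul_zero, add_zero, div_pow, mul_pow, mul_pow, Real.sq_sqrt hA.le,
      Real.sq_sqrt hbpos.le]
    field_simp
    linear_combination hb2
  -- extend sums to univ
  have hsumwU : ∑ i, w i = lam1 := by
    rw [← hsumw]
    exact (Finset.sum_subset I.subset_univ (fun i _ hi => w0 i hi)).symm
  have hsumw2U : ∑ i, (w i)^2 = lam2^2 := by
    rw [← hsumw2]
    exact (Finset.sum_subset I.subset_univ (fun i _ hi => by rw [w0 i hi]; ring)).symm
  have hwD : w ∈ Dset n lam1 lam2 := by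
    refine ⟨wnn, ?_, ?_⟩
    · rw [l1, Finset.sum_congr rfl (fun i _ => abs_of_nonneg (wnn i))]
      exact hsumwU
    · rw [l2, hsumw2U, Real.sqrt_sq hl2.le]
  refine ⟨hwD, ?_⟩
  rintro q ⟨hq0, hq1, hq2⟩ hmin
  have hqsum : ∑ i, q i = lam1 := by
    rw [← hq1, l1, Finset.sum_congr rfl (fun i _ => abs_of_nonneg (hq0 i))]
  have hqs_nn : (0:ℝ) ≤ ∑ i, (q i)^2 := Finset.sum_nonneg fun i _ => sq_nonneg _
  have hqsq : ∑ i, (q i)^2 = lam2^2 := by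
    rw [← Real.sq_sqrt hqs_nn, ← l2, hq2]
  -- from minimality: inner products
  have hineq : ∑ i, (q i - y i)^2 ≤ ∑ i, (w i - y i)^2 := by
    have h1 : (0:ℝ) ≤ ∑ i, (q i - y i)^2 := Finset.sum_nonneg fun i _ => sq_nonneg _
    have h2 : (0:ℝ) ≤ ∑ i, (w i - y i)^2 := Finset.sum_nonneg fun i _ => sq_nonneg _
    have h3 := pow_le_pow_left₀ (Real.sqrt_nonneg _) hmin 2
    simp only [l2] at h3
    rwa [Real.sq_sqrt h1, Real.sq_sqrt h2] at h3
  have hqy : ∑ i, w i * y i ≤ ∑ i, q i * y i := by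
    rw [sum_expand q y, sum_expand w y, hqsq, hsumw2U] at hineq
    linarith
  -- shift by β
  have hshift : ∀ u : Fin n → ℝ, ∑ i, u i * (y i - β)
      = ∑ i, u i * y i - β * ∑ i, u i := by
    intro u
    rw [Finset.mul_sum, ← Finset.sum_sub_distrib]
    exact Finset.sum_congr rfl fun i _ => by ring
  have key1 : K * ∑ i, q i * (y i - β) ≤ ∑ i, q i * w i := by
    rw [Finset.mul_sum]
    refine Finset.sum_le_sum fun i _ => ?_
    by_cases hi : i ∈ I
    · rw [walt i hi]; exact le_of_eq (by ring)
    · rw [w0 i hi, mul_zero]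
      have h5 : q i * (y i - β) ≤ 0 :=
        mul_nonpos_iff.2 (Or.inl ⟨hq0 i, sub_nonpos.2 (hgt i hi).le⟩)
      exact mul_nonpos_iff.2 (Or.inl ⟨hKpos.le, h5⟩)
  have key2 : K * ∑ i, w i * (y i - β) = ∑ i, w i * w i := by
    rw [Finset.mul_sum]
    refine Finset.sum_congr rfl fun i _ => ?_
    by_cases hi : i ∈ I
    · rw [walt i hi]; ring
    · rw [w0 i hi]; ring
  have hww : ∑ i, w i * w i = lam2^2 := by
    rw [← hsumw2U]; exact Finset.sum_congr rfl fun i _ => (sq (w i)).symm ▸ by ring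
  have hwyb : ∑ i, w i * (y i - β) ≤ ∑ i, q i * (y i - β) := by
    rw [hshift q, hshift w, hqsum, hsumwU]
    linarith
  have hqw : lam2^2 ≤ ∑ i, q i * w i := by
    have := mul_le_mul_of_nonneg_left hwyb hKpos.le
    rw [key2, hww] at this
    linarith [key1]
  have hfin : ∑ i, (q i - w i)^2 ≤ 0 := by
    rw [sum_expand q w, hqsq, hsumw2U]
    linarith
  have hzero : ∑ i, (q i - w i)^2 = 0 :=
    le_antisymm hfin (Finset.sum_nonneg fun i _ => sq_nonneg _)
  funext i
  have := (Finset.sum_eq_zero_iff_of_nonneg (fun i _ => sq_nonneg (q i - w i))).1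
    hzero i (Finset.mem_univ i)
  have := pow_eq_zero_iff (n := 2) (by norm_num) |>.1 this
  linarith [this]

set_option maxHeartbeats 2000000 in
theorem stmt_18 {n : ℕ} (lam1 lam2 : ℝ)
    (h0 : 0 < lam2) (h1 : lam2 < lam1) (h2 : lam1 < Real.sqrt n * lam2)
    (x : Fin n → ℝ) (hx : ∀ i, 0 ≤ x i) (hxD : x ∉ Dset n lam1 lam2)
    (P : (Fin n → ℝ) → (Fin n → ℝ))
    (hP : ∀ y, P y ∈ Dset n lam1 lam2 ∧
      ∀ z ∈ Dset n lam1 lam2, l2 (fun i => P y i - y i) ≤ l2 (fun i => z i - y i))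
    (p : Fin n → ℝ) (hpx : P x = p)
    (huniq : ∀ q ∈ Dset n lam1 lam2,
      (∀ z ∈ Dset n lam1 lam2, l2 (fun i => q i - x i) ≤ l2 (fun i => z i - x i)) → q = p)
    (α : ℝ)
    (hα : ∀ i, p i = lam2 * max (x i - α) 0 / l2 (fun j => max (x j - α) 0))
    (hne : ∀ i, x i ≠ α)
    (I : Finset (Fin n)) (hI : I = Finset.univ.filter (fun i => 0 < p i))
    (d : ℕ) (hd : d = I.card)
    (a b : ℝ)
    (ha : a = d * (∑ i ∈ I, (x i) ^ 2) - (∑ i ∈ I, x i) ^ 2) (hapos : 0 < a)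
    (hb : b = d * lam2 ^ 2 - lam1 ^ 2) (hbpos : 0 < b) :
    DifferentiableAt ℝ P x ∧
    ∀ y : Fin n → ℝ, ∀ i : Fin n,
      fderiv ℝ P x y i =
        if i ∈ I then
          Real.sqrt (b / a) * y i -
            (1 / Real.sqrt (a * b)) *
              (lam2 ^ 2 * (∑ j ∈ I, y j) + d * (p i * ∑ j ∈ I, p j * y j)
                - lam1 * ((∑ j ∈ I, p j * y j) + p i * (∑ j ∈ I, y j)))
        else 0 := by
  have hl1pos : 0 < lam1 := h0.trans h1
  have hpD : p ∈ Dset n lam1 lam2 := hpx ▸ (hP x).1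
  obtain ⟨hp0', hp1, hp2⟩ := hpD
  set N : ℝ := l2 (fun j => max (x j - α) 0) with hN
  have hN0 : 0 ≤ N := Real.sqrt_nonneg _
  have hNpos : 0 < N := by
    rcases hN0.lt_or_eq with h | h
    · exact h
    · exfalso
      have hz : ∀ i, p i = 0 := fun i => by rw [hα i, ← h, div_zero]
      rw [l1] at hp1
      simp only [hz, abs_zero, Finset.sum_const_zero] at hp1
      linarith
  have hmem : ∀ i, (i ∈ I ↔ α < x i) := by
    intro i
    rw [hI, Finset.mem_filter]
    simp only [Finset.mem_univ, true_and]
    rw [hα i]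
    constructor
    · intro h
      by_contra hle
      push_neg at hle
      rw [max_eq_right (by linarith)] at h
      simp at h
    · intro h
      rw [max_eq_left (by linarith)]
      exact div_pos (mul_pos h0 (by linarith)) hNpos
  have hp0 : ∀ i ∉ I, p i = 0 := by
    intro i hi
    rw [hα i, max_eq_right (by
      have := (hmem i).not.1 hi; push_neg at this; linarith), mul_zero, zero_div]
  have hpI : ∀ i ∈ I, p i = lam2 / N * (x i - α) := by
    intro i hi
    rw [hα i, max_eq_left (by have := (hmem i).1 hi; linarith)]
    ring
  have habs : ∀ i ∈ Finset.univ, |p i| = p i := fun i _ => abs_of_nonneg (hp0' i)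
  have hsum1 : ∑ i ∈ I, p i = lam1 := by
    rw [← hp1, l1, Finset.sum_congr rfl habs]
    exact Finset.sum_subset I.subset_univ (fun i _ hi => hp0 i hi)
  have hd0 : 0 < d := by
    rcases Nat.eq_zero_or_pos d with h | h
    · exfalso
      rw [h] at hd
      have : I = ∅ := Finset.card_eq_zero.1 hd.symm
      rw [this, Finset.sum_empty] at hsum1
      linarith
    · exact h
  have hdR : (0:ℝ) < d := by exact_mod_cast hd0
  have hsum2 : ∑ i ∈ I, (p i)^2 = lam2^2 := by
    have hnn : (0:ℝ) ≤ ∑ i, (p i)^2 := Finset.sum_nonneg fun i _ => sq_nonneg _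
    have : ∑ i, (p i)^2 = lam2^2 := by rw [← Real.sq_sqrt hnn, ← l2, hp2]
    rw [← this]
    exact Finset.sum_subset I.subset_univ (fun i _ hi => by rw [hp0 i hi]; ring)
  set c : ℝ := lam2 / N with hc
  have hcpos : 0 < c := div_pos h0 hNpos
  have e1 : c * (∑ i ∈ I, (x i - α)) = lam1 := by
    rw [Finset.mul_sum, ← hsum1]
    exact Finset.sum_congr rfl fun i hi => (hpI i hi).symm
  have e2 : c^2 * (∑ i ∈ I, (x i - α)^2) = lam2^2 := by
    rw [Finset.mul_sum, ← hsum2]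
    exact Finset.sum_congr rfl fun i hi => by rw [hpI i hi]; ring
  have hsa1 : ∑ i ∈ I, (x i - α) = (∑ i ∈ I, x i) - d * α := by
    rw [Finset.sum_sub_distrib, Finset.sum_const, ← hd, nsmul_eq_mul]
  have hsa2 : ∑ i ∈ I, (x i - α)^2
      = (∑ i ∈ I, (x i)^2) - 2*α*(∑ i ∈ I, x i) + d * α^2 := by
    have h : ∀ i ∈ I, (x i - α)^2 = (x i)^2 - 2*α*(x i) + α^2 := fun i _ => by ring
    rw [Finset.sum_congr rfl h, Finset.sum_add_distrib, Finset.sum_sub_distrib,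
      ← Finset.mul_sum, Finset.sum_const, ← hd, nsmul_eq_mul]
  have ea : (d:ℝ) * (∑ i ∈ I, (x i - α)^2) - (∑ i ∈ I, (x i - α))^2 = a := by
    rw [hsa1, hsa2, ha]; ring
  have ecb : a * c^2 = b := by
    have h' : a * c^2 = (d:ℝ) * (c^2 * ∑ i ∈ I, (x i - α)^2)
        - (c * ∑ i ∈ I, (x i - α))^2 := by rw [← ea]; ring
    rw [h', e2, e1, hb]
  have hsa : (0:ℝ) < Real.sqrt a := Real.sqrt_pos.2 hapos
  have hsb : (0:ℝ) < Real.sqrt b := Real.sqrt_pos.2 hbpos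
  have hcsq : c = Real.sqrt b / Real.sqrt a := by
    have h' : c^2 = b / a := by
      rw [eq_div_iff hapos.ne']; linarith [ecb]
    rw [← Real.sqrt_sq hcpos.le, h', Real.sqrt_div hbpos.le]
  have hAx : Aq I d x = a := by rw [Aq, ha]
  have hAxpos : 0 < Aq I d x := hAx ▸ hapos
  have hlam1e : lam1 * Real.sqrt a = Real.sqrt b * (∑ i ∈ I, (x i - α)) := by
    rw [← e1, hcsq]
    field_simp
  have hβx : Bt I d lam1 b x = α := by
    rw [Bt, hAx, div_eq_iff hdR.ne']
    have h' : lam1 * Real.sqrt a / Real.sqrt b = (∑ i ∈ I, x i) - d * α := by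
      rw [hlam1e, ← hsa1]
      field_simp
    rw [h']
    ring
  have hb2 : b + lam1^2 = d * lam2^2 := by rw [hb]; ring
  have hltx : ∀ i ∈ I, Bt I d lam1 b x < x i := fun i hi => by
    rw [hβx]; exact (hmem i).1 hi
  have hgtx : ∀ i ∉ I, x i < Bt I d lam1 b x := fun i hi => by
    rw [hβx]
    have h' := (hmem i).not.1 hi
    push_neg at h'
    exact lt_of_le_of_ne h' (hne i)
  have hpF : p = Fm I d lam1 b x := by
    funext i
    by_cases hi : i ∈ I
    · rw [hpI i hi, Fm_alt hbpos hdR.ne' x hAxpos hi, hβx, hAx, hcsq]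
      ring
    · rw [hp0 i hi, Fm, if_neg hi]
  -- Part B: P = Fm near x
  have contA : Continuous (Aq I d) := by
    unfold Aq
    exact (continuous_const.mul
      (continuous_finset_sum I fun j _ => (continuous_apply j).pow 2)).sub
      ((continuous_finset_sum I fun j _ => continuous_apply j).pow 2)
  have contB : Continuous (Bt I d lam1 b) := by
    unfold Bt
    exact ((continuous_finset_sum I fun j _ => continuous_apply j).sub
      ((continuous_const.mul (Real.continuous_sqrt.comp contA)).div_const _)).div_const _
  have evA : ∀ᶠ y in nhds x, 0 < Aq I d y :=
    ContinuousAt.eventually_lt continuousAt_const contA.continuousAt hAxpos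
  have evC : ∀ᶠ y in nhds x, ∀ i,
      (i ∈ I → Bt I d lam1 b y < y i) ∧ (i ∉ I → y i < Bt I d lam1 b y) := by
    rw [Filter.eventually_all]
    intro i
    by_cases hi : i ∈ I
    · have h' := ContinuousAt.eventually_lt contB.continuousAt
        (continuous_apply i).continuousAt (hltx i hi)
      exact h'.mono fun y hy => ⟨fun _ => hy, fun h'' => absurd hi h''⟩
    · have h' := ContinuousAt.eventually_lt (continuous_apply i).continuousAt
        contB.continuousAt (hgtx i hi)
      exact h'.mono fun y hy => ⟨fun h'' => absurd h'' hi, fun _ => hy⟩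
  have evPF : P =ᶠ[nhds x] Fm I d lam1 b := by
    filter_upwards [evA, evC] with y hAy hCy
    obtain ⟨hFmem, hFuniq⟩ := key hd.symm hd0 h0 hl1pos hbpos hb2 y hAy
      (fun i hi => (hCy i).1 hi) (fun i hi => (hCy i).2 hi)
    exact hFuniq (P y) (hP y).1 ((hP y).2 _ hFmem)
  -- Part C: differentiation of Fm at x
  have hfun : ∀ i ∈ I, (fun z => Fm I d lam1 b z i)
      = (fun z : Fin n → ℝ =>
          Real.sqrt b * (Real.sqrt ((d:ℝ) * (∑ j ∈ I, (z j)^2) - (∑ j ∈ I, z j)^2))⁻¹ *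
            (z i - (1/(d:ℝ)) * ∑ j ∈ I, z j) + lam1/(d:ℝ)) := by
    intro i hi
    funext z
    simp only [Fm, if_pos hi, Aq]
    ring
  have hAxexp : (0:ℝ) < (d:ℝ) * (∑ j ∈ I, (x j)^2) - (∑ j ∈ I, x j)^2 := by
    rw [← ha]; exact hapos
  have hsAne : Real.sqrt ((d:ℝ) * (∑ j ∈ I, (x j)^2) - (∑ j ∈ I, x j)^2) ≠ 0 :=
    (Real.sqrt_pos.2 hAxexp).ne'
  have hS1' := HasFDerivAt.fun_sum (u := I) (fun j (_ : j ∈ I) => hasFDerivAt_apply (𝕜 := ℝ) j x)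
  have hS2' := HasFDerivAt.fun_sum (u := I)
    (fun j (_ : j ∈ I) => (hasDerivAt_pow 2 (x j)).comp_hasFDerivAt x (hasFDerivAt_apply (𝕜 := ℝ) j x))
  have hA' := (hS2'.const_mul (d:ℝ)).sub
    ((hasDerivAt_pow 2 (∑ j ∈ I, x j)).comp_hasFDerivAt x hS1')
  have hsA' := hA'.sqrt hAxexp.ne'
  have hinv' := (hasDerivAt_inv hsAne).comp_hasFDerivAt x hsA'
  have hKc' := hinv'.const_mul (Real.sqrt b)
  have hEx : ∀ i, ∃ L : (Fin n → ℝ) →L[ℝ] ℝ,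
      HasFDerivAt (fun z => Fm I d lam1 b z i) L x ∧
      ∀ y, L y = (if i ∈ I then
          Real.sqrt (b / a) * y i -
            (1 / Real.sqrt (a * b)) *
              (lam2 ^ 2 * (∑ j ∈ I, y j) + d * (p i * ∑ j ∈ I, p j * y j)
                - lam1 * ((∑ j ∈ I, p j * y j) + p i * (∑ j ∈ I, y j)))
        else 0) := by
    intro i
    by_cases hi : i ∈ I
    · have hbig := (hKc'.mul ((hasFDerivAt_apply (𝕜 := ℝ) i x).sub
        (hS1'.const_mul (1/(d:ℝ))))).add_const (lam1/(d:ℝ))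
      refine ⟨_, (hfun i hi).symm ▸ hbig, ?_⟩
      · intro y
        rw [if_pos hi]
        simp only [ContinuousLinearMap.add_apply, ContinuousLinearMap.smul_apply,
          ContinuousLinearMap.sub_apply, ContinuousLinearMap.coe_sum',
          Finset.sum_apply, ContinuousLinearMap.proj_apply, smul_eq_mul,
          ContinuousLinearMap.coe_smul', Pi.smul_apply]
        have hT : ∑ j ∈ I, p j * y j
            = c * ((∑ j ∈ I, x j * y j) - α * ∑ j ∈ I, y j) := by
          have h' : ∀ j ∈ I, p j * y j = c * (x j * y j) - c * α * y j :=
            fun j hj => by rw [hpI j hj]; ring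
          rw [Finset.sum_congr rfl h', Finset.sum_sub_distrib, ← Finset.mul_sum,
            ← Finset.mul_sum]
          ring
        have hαv : α = ((∑ i ∈ I, x i) - lam1 * Real.sqrt a / Real.sqrt b)/(d:ℝ) := by
          rw [← hβx, Bt, hAx]
        have hl2s : lam2^2 = (Real.sqrt b^2 + lam1^2)/(d:ℝ) := by
          rw [Real.sq_sqrt hbpos.le, eq_div_iff hdR.ne']
          linarith [hb2]
        simp only [Function.comp_apply, pow_one, Nat.cast_ofNat, Pi.sub_apply]
        rw [← ha]
        rw [Real.sqrt_div hbpos.le, Real.sqrt_mul hapos.le]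
        rw [hT, hpI i hi, hcsq, hl2s, hαv]
        simp only [mul_assoc, ← Finset.mul_sum]
        obtain ⟨sa, hsa_def⟩ : ∃ sa, Real.sqrt a = sa := ⟨_, rfl⟩
        obtain ⟨sbv, hsb_def⟩ : ∃ sbv, Real.sqrt b = sbv := ⟨_, rfl⟩
        have hsa0 : sa ≠ 0 := by rw [← hsa_def]; exact hsa.ne'
        have hsb0 : sbv ≠ 0 := by rw [← hsb_def]; exact hsb.ne'
        rw [hsa_def, hsb_def]
        field_simp
        ring
    · have hz : (fun z => Fm I d lam1 b z i) = fun _ : Fin n → ℝ => (0:ℝ) :=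
        funext fun z => by simp [Fm, hi]
      exact ⟨0, hz.symm ▸ hasFDerivAt_const (0:ℝ) x, fun y => by rw [if_neg hi]; rfl⟩
  choose L hL hLval using hEx
  have hdiffc : ∀ i, DifferentiableAt ℝ (fun z => Fm I d lam1 b z i) x :=
    fun i => (hL i).differentiableAt
  have hdiffF : DifferentiableAt ℝ (Fm I d lam1 b) x := differentiableAt_pi.2 hdiffc
  have hdiffP : DifferentiableAt ℝ P x := (evPF.differentiableAt_iff).2 hdiffF
  refine ⟨hdiffP, ?_⟩
  intro y i
  have hfd : fderiv ℝ P x = fderiv ℝ (Fm I d lam1 b) x := evPF.fderiv_eq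
  have hpi : fderiv ℝ (Fm I d lam1 b) x
      = ContinuousLinearMap.pi (fun j => fderiv ℝ (fun z => Fm I d lam1 b z j) x) :=
    fderiv_pi hdiffc
  rw [hfd, hpi, ContinuousLinearMap.pi_apply, (hL i).fderiv, hLval i y]
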